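/- Let {Z_n} be a stationary Gaussian process whose covariance function γ_d is that of a FARIMA(0,d,0) process with d ∈ (0,1/2), i.e. γ_d(n) = γ_d(0) ∏_{k=1}^n (k−1+d)/(k−d) with γ_d(0) = Γ(1−2d)/Γ(1−d)². Then there exists a constant c₂ > 0 (depending only on d) such that for all 1 ≤ b < k, the canonical correlation ρ_{k,b} between (Z_1,…,Z_b) and (Z_{k+1},…,Z_{k+b}) satisfies ρ_{k,b} ≥ c₂ (b/(k+b−1))^{1−2d}. -/

import Mathlib

/-- The FARIMA(0,d,0) autocovariance function:
γ_d(n) = γ_d(0) ∏_{k=1}^n (k-1+d)/(k-d), γ_d(0) = Γ(1-2d)/Γ(1-d)². -/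
noncomputable def gammaFARIMA (d : ℝ) (n : ℕ) : ℝ :=
  (Real.Gamma (1 - 2*d) / (Real.Gamma (1 - d))^2) *
    ∏ k ∈ Finset.Icc 1 n, (((k : ℝ) - 1 + d) / ((k : ℝ) - d))

/-- Canonical correlation between the blocks (Z_1,…,Z_b) and (Z_{k+1},…,Z_{k+b})
of a stationary process with autocovariance γ, expressed through the covariance
structure: sup over u, v of the correlation of ⟨u,Z_1^b⟩ and ⟨v,Z_{k+1}^{k+b}⟩. -/
noncomputable def canCorr (γ : ℕ → ℝ) (k b : ℕ) : ℝ :=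
  sSup {r : ℝ | ∃ u v : Fin b → ℝ,
    r = (∑ i : Fin b, ∑ j : Fin b, u i * v j * γ (k + (j : ℕ) - (i : ℕ))) /
      (Real.sqrt (∑ i : Fin b, ∑ j : Fin b, u i * u j *
          γ (((i : ℕ) : ℤ) - ((j : ℕ) : ℤ)).natAbs) *
       Real.sqrt (∑ i : Fin b, ∑ j : Fin b, v i * v j *
          γ (((i : ℕ) : ℤ) - ((j : ℕ) : ℤ)).natAbs))}

open Finset Real

/-! ### Auxiliary development -/

noncomputable def Pp (d : ℝ) (n : ℕ) : ℝ :=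
  ∏ k ∈ Finset.Icc 1 n, (((k : ℝ) - 1 + d) / ((k : ℝ) - d))

def ndist (p q : ℕ) : ℕ := max p q - min p q

noncomputable def indW (j s p : ℕ) : ℝ := if p ≤ s ∧ s < p + j then 1 else 0

noncomputable def coefD (g : ℕ → ℝ) (L j : ℕ) : ℝ :=
  if j = L then g (L-1) - g L else g (j+1) - 2*g j + g (j-1)

noncomputable def Sform (g : ℕ → ℝ) (L : ℕ) (x y : ℕ → ℝ) : ℝ :=
  ∑ p ∈ Finset.range L, ∑ q ∈ Finset.range L, x p * y q * g (ndist p q)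

noncomputable def extendF (b : ℕ) (u : Fin b → ℝ) : ℕ → ℝ :=
  fun i => if h : i < b then u ⟨i, h⟩ else 0

noncomputable def shiftF (k : ℕ) (x : ℕ → ℝ) : ℕ → ℝ :=
  fun p => if k ≤ p then x (p - k) else 0



section
variable {d : ℝ} (hd : 0 < d) (hd2 : d < 1/2)

lemma Pp_zero : Pp d 0 = 1 := by simp [Pp]

lemma Pp_succ (n : ℕ) : Pp d (n+1) = Pp d n * (((n : ℝ) + d) / ((n : ℝ) + 1 - d)) := by
  rw [Pp, Pp, Finset.prod_Icc_succ_top (Nat.le_add_left 1 n)]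
  congr 1
  push_cast
  ring_nf

include hd hd2 in
lemma Pp_pos (n : ℕ) : 0 < Pp d n := by
  apply Finset.prod_pos
  intro k hk
  simp only [Finset.mem_Icc] at hk
  have h1 : (1:ℝ) ≤ (k:ℝ) := by exact_mod_cast hk.1
  apply div_pos <;> nlinarith

include hd hd2 in
lemma Pp_ratio_mem (n : ℕ) : 0 < ((n : ℝ) + d) / ((n : ℝ) + 1 - d) ∧
    ((n : ℝ) + d) / ((n : ℝ) + 1 - d) ≤ 1 := by
  have hn : (0:ℝ) ≤ n := Nat.cast_nonneg n
  constructor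
  · apply div_pos <;> nlinarith
  · rw [div_le_one (by nlinarith)]; nlinarith

include hd hd2 in
lemma Pp_succ_le (n : ℕ) : Pp d (n+1) ≤ Pp d n := by
  rw [Pp_succ]
  nlinarith [Pp_pos hd hd2 n, (Pp_ratio_mem hd hd2 n).1, (Pp_ratio_mem hd hd2 n).2]

include hd hd2 in
lemma Pp_antitone : Antitone (Pp d) :=
  antitone_nat_of_succ_le (Pp_succ_le hd hd2)

include hd hd2 in
lemma Pp_convex (n : ℕ) : Pp d n + Pp d (n+2) ≥ 2 * Pp d (n+1) := by
  have hP := Pp_pos hd hd2 n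
  have hr := Pp_ratio_mem hd hd2 n
  have hr' := Pp_ratio_mem hd hd2 (n+1)
  set r := ((n : ℝ) + d) / ((n : ℝ) + 1 - d) with hrdef
  set r' := (((n:ℝ)+1) + d) / (((n:ℝ)+1) + 1 - d) with hr'def
  have h1 : Pp d (n+1) = Pp d n * r := Pp_succ n
  have h2 : Pp d (n+2) = Pp d n * r * r' := by
    rw [show n+2 = (n+1)+1 from rfl, Pp_succ, h1]; push_cast; rw [hr'def]
  have hrr' : r ≤ r' := by
    rw [hrdef, hr'def]
    have hn : (0:ℝ) ≤ n := Nat.cast_nonneg n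
    rw [div_le_div_iff₀ (by nlinarith) (by nlinarith)]
    nlinarith
  -- 1 + r * r' ≥ 2r
  have key : 1 + r * r' ≥ 2 * r := by nlinarith [hr.1, hr.2, hr'.1, hr'.2]
  calc Pp d n + Pp d (n+2) = Pp d n * (1 + r * r') := by rw [h2]; ring
    _ ≥ Pp d n * (2 * r) := by nlinarith
    _ = 2 * Pp d (n+1) := by rw [h1]; ring

end

section
variable {d : ℝ} (hd : 0 < d) (hd2 : d < 1/2)

include hd hd2 in
lemma bern_up {x : ℝ} (hx : 0 < x) :
    x / (x + (1 - 2*d)) ≤ (x / (x + 1)) ^ (1 - 2*d) := by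
  set t := 1 - 2*d with ht
  have ht0 : 0 < t := by rw [ht]; linarith
  have ht1 : t < 1 := by rw [ht]; linarith
  have h1 : ((1 : ℝ) + 1/x) ^ t ≤ 1 + t * (1/x) :=
    rpow_one_add_le_one_add_mul_self (by have := one_div_pos.mpr hx; linarith) ht0.le ht1.le
  have hx1 : (0:ℝ) < x + 1 := by linarith
  have hxt : (0:ℝ) < x + t := by linarith
  have e1 : (1 : ℝ) + 1/x = (x+1)/x := by field_simp
  have e2 : (1 : ℝ) + t * (1/x) = (x+t)/x := by field_simp
  rw [e1, e2] at h1
  have h2 : (x/(x+1)) ^ t = (((x+1)/x) ^ t)⁻¹ := by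
    rw [← Real.inv_rpow (by positivity)]
    congr 1
    field_simp
  rw [h2]
  rw [le_inv_comm₀ (by positivity) (by positivity)]
  calc ((x+1)/x) ^ t ≤ (x+t)/x := h1
    _ = (x / (x+t))⁻¹ := by field_simp
  
include hd hd2 in
lemma bern_low {a : ℝ} (ha : 1 ≤ a) :
    ((a - 1) / a) ^ (1 - 2*d) ≤ (a - (1 - 2*d)) / a := by
  have ha0 : 0 < a := by linarith
  have h1 : ((1 : ℝ) + (-(1/a))) ^ (1-2*d) ≤ 1 + (1-2*d) * (-(1/a)) :=
    rpow_one_add_le_one_add_mul_self (by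
      have : 1/a ≤ 1 := by rw [div_le_one ha0]; linarith
      linarith) (by linarith) (by linarith)
  have e1 : (1 : ℝ) + (-(1/a)) = (a-1)/a := by field_simp; ring
  have e2 : (1 : ℝ) + (1-2*d) * (-(1/a)) = (a - (1-2*d))/a := by field_simp; ring
  rw [e1, e2] at h1
  exact h1

include hd hd2 in
lemma Pp_upper : ∀ n : ℕ, Pp d n ≤ (d/((n:ℝ)+d)) ^ (1-2*d) := by
  intro n
  induction n with
  | zero =>
    simp only [Nat.cast_zero, zero_add, Pp_zero, div_self hd.ne']
    rw [Real.one_rpow]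

  | succ n ih =>
    rw [Pp_succ]
    have hx : (0:ℝ) < (n:ℝ) + d := by positivity
    have hr : ((n : ℝ) + d) / ((n : ℝ) + 1 - d) ≤ (((n:ℝ)+d) / (((n:ℝ)+d) + 1)) ^ (1-2*d) := by
      have := bern_up hd hd2 hx
      have e : (n:ℝ) + d + (1 - 2*d) = (n:ℝ) + 1 - d := by ring
      rw [e] at this
      exact this
    have hrpos : 0 < ((n : ℝ) + d) / ((n : ℝ) + 1 - d) := by
      apply div_pos hx; push_cast; nlinarith [Nat.cast_nonneg (α := ℝ) n]
    calc Pp d n * (((n : ℝ) + d) / ((n : ℝ) + 1 - d))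
        ≤ (d/((n:ℝ)+d)) ^ (1-2*d) * ((((n:ℝ)+d) / (((n:ℝ)+d) + 1)) ^ (1-2*d)) := by
          apply mul_le_mul ih hr hrpos.le (by positivity)
      _ = (d/((n:ℝ)+d) * (((n:ℝ)+d) / (((n:ℝ)+d) + 1))) ^ (1-2*d) := by
          rw [← Real.mul_rpow (by positivity) (by positivity)]
      _ = (d/((↑(n+1):ℝ)+d)) ^ (1-2*d) := by
          congr 1
          have h1 : ((n:ℝ)+d) ≠ 0 := by positivity
          have h2 : ((n:ℝ)+d+1) ≠ 0 := by positivity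
          push_cast
          field_simp
          ring

include hd hd2 in
lemma Pp_lower : ∀ n : ℕ, 1 ≤ n →
    (d/(1-d)) * ((1-d)/((n:ℝ)-d)) ^ (1-2*d) ≤ Pp d n := by
  intro n hn
  induction n, hn using Nat.le_induction with
  | base =>
    have : Pp d 1 = d / (1-d) := by
      rw [Pp]
      rw [show Finset.Icc 1 1 = {1} from rfl, Finset.prod_singleton]
      norm_num
    rw [this, Nat.cast_one, div_self (by linarith : (1:ℝ)-d ≠ 0), Real.one_rpow, mul_one]
  | succ n hn ih =>
    rw [Pp_succ]
    have hn1 : (1:ℝ) ≤ (n:ℝ) := by exact_mod_cast hn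
    have ha : (1:ℝ) ≤ (n:ℝ) + 1 - d := by linarith
    have key : (((n:ℝ)-d)/((n:ℝ)+1-d)) ^ (1-2*d) ≤ ((n:ℝ)+d)/((n:ℝ)+1-d) := by
      have := bern_low hd hd2 ha
      have e1 : (n:ℝ) + 1 - d - 1 = (n:ℝ) - d := by ring
      have e2 : (n:ℝ) + 1 - d - (1 - 2*d) = (n:ℝ) + d := by ring
      rw [e1, e2] at this
      exact this
    have hbase : (0:ℝ) < (1-d)/((n:ℝ)-d) := by
      apply div_pos (by linarith) (by linarith)
    calc (d/(1-d)) * ((1-d)/((↑(n+1):ℝ)-d)) ^ (1-2*d)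
        = (d/(1-d)) * (((1-d)/((n:ℝ)-d)) * (((n:ℝ)-d)/((n:ℝ)+1-d))) ^ (1-2*d) := by
          congr 2
          have h1 : ((n:ℝ)-d) ≠ 0 := by nlinarith
          have h2 : ((n:ℝ)+1-d) ≠ 0 := by nlinarith
          push_cast
          field_simp
          try ring
          try tauto
      _ = (d/(1-d)) * (((1-d)/((n:ℝ)-d)) ^ (1-2*d) * ((((n:ℝ)-d)/((n:ℝ)+1-d)) ^ (1-2*d))) := by
          rw [Real.mul_rpow hbase.le (div_nonneg (by linarith) (by linarith))]
      _ ≤ (d/(1-d)) * (((1-d)/((n:ℝ)-d)) ^ (1-2*d) * (((n:ℝ)+d)/((n:ℝ)+1-d))) := by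
          have h1 : (0:ℝ) < d/(1-d) := div_pos hd (by linarith)
          have h2 : (0:ℝ) ≤ ((1-d)/((n:ℝ)-d)) ^ (1-2*d) := by positivity
          nlinarith [mul_le_mul_of_nonneg_left key h2]
      _ = ((d/(1-d)) * ((1-d)/((n:ℝ)-d)) ^ (1-2*d)) * (((n:ℝ)+d)/((n:ℝ)+1-d)) := by ring
      _ ≤ Pp d n * (((n:ℝ)+d)/((n:ℝ)+1-d)) := by
          apply mul_le_mul_of_nonneg_right ih
          apply div_nonneg (by linarith) (by linarith)

include hd hd2 in
lemma sum_rpow_le : ∀ M : ℕ, ∑ m ∈ Finset.Icc 1 M, ((m:ℝ)) ^ (2*d-1) ≤ (M:ℝ)^(2*d) / (2*d) := by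
  intro M
  induction M with
  | zero =>
    simp only [Nat.cast_zero]
    rw [show Finset.Icc 1 0 = ∅ from rfl, Finset.sum_empty,
      Real.zero_rpow (by linarith : 2*d ≠ 0)]
    simp
  | succ M ih =>
    rw [Finset.sum_Icc_succ_top (Nat.le_add_left 1 M)]
    have hM1 : (0:ℝ) < (M:ℝ) + 1 := by positivity
    have bern : ((M:ℝ)/((M:ℝ)+1)) ^ (2*d) ≤ 1 - 2*d/((M:ℝ)+1) := by
      have h1 : ((1:ℝ) + (-(1/((M:ℝ)+1)))) ^ (2*d) ≤ 1 + (2*d) * (-(1/((M:ℝ)+1))) :=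
        rpow_one_add_le_one_add_mul_self (by
          have : 1/((M:ℝ)+1) ≤ 1 := by rw [div_le_one hM1]; linarith
          linarith) (by linarith) (by linarith)
      have e1 : (1:ℝ) + (-(1/((M:ℝ)+1))) = (M:ℝ)/((M:ℝ)+1) := by field_simp; ring
      have e2 : (1:ℝ) + (2*d) * (-(1/((M:ℝ)+1))) = 1 - 2*d/((M:ℝ)+1) := by ring
      rw [e1, e2] at h1
      exact h1
    -- multiply by (M+1)^(2d)
    have key : (M:ℝ)^(2*d) ≤ ((M:ℝ)+1)^(2*d) - 2*d * ((M:ℝ)+1)^(2*d-1) := by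
      have h2 := mul_le_mul_of_nonneg_right bern (by positivity : (0:ℝ) ≤ ((M:ℝ)+1)^(2*d))
      have e3 : ((M:ℝ)/((M:ℝ)+1)) ^ (2*d) * ((M:ℝ)+1)^(2*d) = (M:ℝ)^(2*d) := by
        rw [← Real.mul_rpow (by positivity) (by positivity)]
        congr 1
        field_simp
      have e4 : (1 - 2*d/((M:ℝ)+1)) * ((M:ℝ)+1)^(2*d)
          = ((M:ℝ)+1)^(2*d) - 2*d * ((M:ℝ)+1)^(2*d-1) := by
        rw [Real.rpow_sub hM1, Real.rpow_one]
        field_simp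
      rw [e3, e4] at h2
      exact h2
    have : ((↑(M+1):ℝ)) ^ (2*d-1) = ((M:ℝ)+1)^(2*d-1) := by push_cast; ring_nf
    rw [this]
    have h5 : ((M:ℝ)+1)^(2*d-1) ≤ (((M:ℝ)+1)^(2*d) - (M:ℝ)^(2*d))/(2*d) := by
      rw [le_div_iff₀ (by linarith)]
      nlinarith
    have h6 : (((M:ℝ)+1)^(2*d) - (M:ℝ)^(2*d))/(2*d)
        = ((M:ℝ)+1)^(2*d)/(2*d) - (M:ℝ)^(2*d)/(2*d) := by ring
    push_cast
    linarith [ih, h5]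

end


lemma decompD (g : ℕ → ℝ) : ∀ L n : ℕ, n ≤ L →
    g n = g L + ∑ j ∈ Finset.Icc 1 L, coefD g L j * ((j - n : ℕ) : ℝ) := by
  intro L
  induction L with
  | zero =>
    intro n hn
    interval_cases n
    simp
  | succ L ih =>
    intro n hn
    rcases Nat.lt_or_ge n (L+1) with h | h
    · have hnL : n ≤ L := by omega
      have hIH := ih n hnL
      rw [Finset.sum_Icc_succ_top (Nat.le_add_left 1 L)]
      have hsplit : ∑ j ∈ Finset.Icc 1 L, coefD g (L+1) j * ((j - n : ℕ) : ℝ)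
          = (∑ j ∈ Finset.Icc 1 L, coefD g L j * ((j - n : ℕ) : ℝ))
            + (g (L+1) - g L) * ((L - n : ℕ) : ℝ) := by
        rcases Nat.eq_zero_or_pos L with rfl | hL
        · simp
        · have hmem : L ∈ Finset.Icc 1 L := Finset.mem_Icc.mpr ⟨hL, le_refl L⟩
          rw [← Finset.sum_erase_add _ _ hmem, ← Finset.sum_erase_add _ _ hmem]
          have heq : ∀ j ∈ (Finset.Icc 1 L).erase L,
              coefD g (L+1) j * ((j - n : ℕ) : ℝ) = coefD g L j * ((j - n : ℕ) : ℝ) := by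
            intro j hj
            simp only [Finset.mem_erase, Finset.mem_Icc] at hj
            have h1 : j ≠ L + 1 := by omega
            have h2 : j ≠ L := hj.1
            simp [coefD, h1, h2]
          rw [Finset.sum_congr rfl heq]
          have hcL : coefD g (L+1) L = g (L+1) - 2*g L + g (L-1) := by
            rw [coefD, if_neg (by omega)]
          have hcLL : coefD g L L = g (L-1) - g L := by
            rw [coefD, if_pos rfl]
          rw [hcL, hcLL]
          ring
      rw [hsplit]
      have hcoefTop : coefD g (L+1) (L+1) = g L - g (L+1) := by
        rw [coefD, if_pos rfl]
        simp
      rw [hcoefTop]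
      have hcast : ((L + 1 - n : ℕ) : ℝ) = ((L - n : ℕ) : ℝ) + 1 := by
        have : L + 1 - n = (L - n) + 1 := by omega
        rw [this]; push_cast; ring
      rw [hcast, hIH]
      ring
    · have : n = L + 1 := by omega
      subst this
      have hz : ∀ j ∈ Finset.Icc 1 (L+1), coefD g (L+1) j * ((j - (L+1) : ℕ) : ℝ) = 0 := by
        intro j hj
        simp only [Finset.mem_Icc] at hj
        have : j - (L+1) = 0 := by omega
        rw [this]
        simp
      rw [Finset.sum_congr rfl hz]
      simp


lemma windowW (L j p q : ℕ) (hp : p < L) (hq : q < L) :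
    ∑ s ∈ Finset.range (L + j), indW j s p * indW j s q = ((j - ndist p q : ℕ) : ℝ) := by
  have h1 : ∀ s, indW j s p * indW j s q
      = if s ∈ Finset.Ico (max p q) (min p q + j) then (1:ℝ) else 0 := by
    intro s
    simp only [indW, Finset.mem_Ico]
    by_cases h : max p q ≤ s ∧ s < min p q + j
    · rw [if_pos h, if_pos (show p ≤ s ∧ s < p + j by omega),
        if_pos (show q ≤ s ∧ s < q + j by omega)]
      norm_num
    · rw [if_neg h]
      by_cases hA : p ≤ s ∧ s < p + j
      · rw [if_pos hA, if_neg (show ¬(q ≤ s ∧ s < q + j) by omega)]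
        ring
      · rw [if_neg hA]
        ring
  rw [Finset.sum_congr rfl (fun s _ => h1 s)]
  rw [Finset.sum_ite_mem]
  have hsub : Finset.range (L + j) ∩ Finset.Ico (max p q) (min p q + j)
      = Finset.Ico (max p q) (min p q + j) := by
    apply Finset.inter_eq_right.mpr
    intro s hs
    simp only [Finset.mem_Ico] at hs
    simp only [Finset.mem_range]
    omega
  rw [hsub, Finset.sum_const, Nat.card_Ico, nsmul_eq_mul, mul_one]
  congr 1
  unfold ndist
  omega

lemma Sform_symm (g : ℕ → ℝ) (L : ℕ) (x y : ℕ → ℝ) : Sform g L x y = Sform g L y x := by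
  rw [Sform, Sform, Finset.sum_comm]
  apply Finset.sum_congr rfl; intro p _
  apply Finset.sum_congr rfl; intro q _
  rw [show ndist q p = ndist p q by unfold ndist; omega]
  ring


lemma Sform_eq (g : ℕ → ℝ) (L : ℕ) (z : ℕ → ℝ) :
    Sform g L z z = g L * (∑ p ∈ Finset.range L, z p)^2
      + ∑ j ∈ Finset.Icc 1 L, coefD g L j *
          ∑ s ∈ Finset.range (L+j), (∑ p ∈ Finset.range L, indW j s p * z p)^2 := by
  have key : ∀ p ∈ Finset.range L, ∀ q ∈ Finset.range L,
      z p * z q * g (ndist p q) = z p * z q * g L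
        + ∑ j ∈ Finset.Icc 1 L, coefD g L j *
            ((∑ s ∈ Finset.range (L+j), indW j s p * indW j s q) * (z p * z q)) := by
    intro p hp q hq
    rw [Finset.mem_range] at hp hq
    have hnd : ndist p q ≤ L := by unfold ndist; omega
    rw [decompD g L (ndist p q) hnd, mul_add]
    congr 1
    rw [Finset.mul_sum]
    apply Finset.sum_congr rfl
    intro j _
    rw [windowW L j p q hp hq]
    ring
  rw [Sform]
  rw [Finset.sum_congr rfl (fun p hp => Finset.sum_congr rfl (fun q hq => key p hp q hq))]
  rw [Finset.sum_congr rfl (fun p _ => Finset.sum_add_distrib), Finset.sum_add_distrib]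
  congr 1
  · rw [sq, Finset.sum_mul_sum, Finset.mul_sum]
    apply Finset.sum_congr rfl; intro p _
    rw [Finset.mul_sum]
    apply Finset.sum_congr rfl; intro q _
    ring
  · rw [Finset.sum_congr rfl (fun p _ => Finset.sum_comm), Finset.sum_comm]
    apply Finset.sum_congr rfl; intro j _
    -- goal: ∑p∑q cj * ((∑s a a) * (zp zq)) = cj * ∑s (∑p a z)^2
    rw [Finset.mul_sum]
    rw [show (∑ s ∈ Finset.range (L+j), coefD g L j * (∑ p ∈ Finset.range L, indW j s p * z p)^2)
        = ∑ s ∈ Finset.range (L+j), ∑ p ∈ Finset.range L, ∑ q ∈ Finset.range L,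
            coefD g L j * ((indW j s p * z p) * (indW j s q * z q)) from
      Finset.sum_congr rfl (fun s _ => by
        rw [sq, Finset.sum_mul_sum, Finset.mul_sum]
        apply Finset.sum_congr rfl; intro p _
        rw [Finset.mul_sum])]
    symm
    rw [Finset.sum_comm]
    apply Finset.sum_congr rfl; intro p _
    rw [Finset.sum_comm]
    apply Finset.sum_congr rfl; intro q _
    rw [Finset.sum_mul, Finset.mul_sum]
    apply Finset.sum_congr rfl; intro s _
    ring

lemma Sform_nonneg (g : ℕ → ℝ) (L : ℕ) (hgL : 0 ≤ g L)
    (hcoef : ∀ j ∈ Finset.Icc 1 L, 0 ≤ coefD g L j) (z : ℕ → ℝ) :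
    0 ≤ Sform g L z z := by
  rw [Sform_eq]
  apply add_nonneg (mul_nonneg hgL (sq_nonneg _))
  apply Finset.sum_nonneg
  intro j hj
  exact mul_nonneg (hcoef j hj) (Finset.sum_nonneg fun s _ => sq_nonneg _)

lemma Sform_smul_add (g : ℕ → ℝ) (L : ℕ) (x y z : ℕ → ℝ) (t : ℝ) :
    Sform g L (fun p => x p + t * y p) z = Sform g L x z + t * Sform g L y z := by
  simp only [Sform, Finset.mul_sum, ← Finset.sum_add_distrib]
  apply Finset.sum_congr rfl; intro p _
  apply Finset.sum_congr rfl; intro q _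
  ring

lemma Sform_cs (g : ℕ → ℝ) (L : ℕ) (hgL : 0 ≤ g L)
    (hcoef : ∀ j ∈ Finset.Icc 1 L, 0 ≤ coefD g L j) (x y : ℕ → ℝ) :
    (Sform g L x y)^2 ≤ Sform g L x x * Sform g L y y := by
  have hq : ∀ t : ℝ, 0 ≤ Sform g L y y * (t*t) + (2 * Sform g L x y) * t + Sform g L x x := by
    intro t
    have h0 := Sform_nonneg g L hgL hcoef (fun p => x p + t * y p)
    have hexp : Sform g L (fun p => x p + t*y p) (fun p => x p + t*y p)
        = Sform g L y y * (t*t) + (2*Sform g L x y)*t + Sform g L x x := by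
      rw [Sform_smul_add, Sform_symm g L x, Sform_smul_add,
        Sform_symm g L y (fun p => x p + t * y p), Sform_smul_add, Sform_symm g L y x]
      ring
    rw [hexp] at h0
    exact h0
  have hd := discrim_le_zero hq
  rw [discrim] at hd
  nlinarith [hd]


/-! ### Embedding lemmas -/

lemma extendF_vanish (b : ℕ) (u : Fin b → ℝ) (p : ℕ) (hp : b ≤ p) : extendF b u p = 0 := by
  rw [extendF, dif_neg (by omega)]

lemma extendF_apply (b : ℕ) (u : Fin b → ℝ) (i : Fin b) : extendF b u (i : ℕ) = u i := by
  rw [extendF, dif_pos i.isLt]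
  
lemma fin2range (b : ℕ) (g : ℕ → ℝ) (u w : Fin b → ℝ) (F : ℕ → ℕ → ℕ) :
    ∑ i : Fin b, ∑ j : Fin b, u i * w j * g (F (i : ℕ) (j : ℕ))
      = ∑ p ∈ Finset.range b, ∑ q ∈ Finset.range b,
          extendF b u p * extendF b w q * g (F p q) := by
  rw [← Fin.sum_univ_eq_sum_range
    (fun p => ∑ q ∈ Finset.range b, extendF b u p * extendF b w q * g (F p q)) b]
  apply Finset.sum_congr rfl; intro i _
  rw [← Fin.sum_univ_eq_sum_range (fun q => extendF b u (i:ℕ) * extendF b w q * g (F (i:ℕ) q)) b]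
  apply Finset.sum_congr rfl; intro j _
  rw [extendF_apply, extendF_apply]

lemma Sform_restrict (g : ℕ → ℝ) {L b : ℕ} (hbL : b ≤ L) (x y : ℕ → ℝ)
    (hx : ∀ p, b ≤ p → x p = 0) (hy : ∀ p, b ≤ p → y p = 0) :
    Sform g L x y = Sform g b x y := by
  rw [Sform, Sform]
  rw [← Finset.sum_subset (Finset.range_subset_range.mpr hbL) (fun p _ hnp => ?_)]
  · apply Finset.sum_congr rfl; intro p _
    refine (Finset.sum_subset (Finset.range_subset_range.mpr hbL) (fun q _ hnq => ?_)).symm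
    rw [Finset.mem_range, not_lt] at hnq
    rw [hy q hnq]
    ring
  · rw [Finset.mem_range, not_lt] at hnp
    apply Finset.sum_eq_zero
    intro q _
    rw [hx p hnp]
    ring

lemma shiftF_vanish_low (k : ℕ) (x : ℕ → ℝ) (p : ℕ) (hp : p < k) : shiftF k x p = 0 := by
  rw [shiftF, if_neg (by omega)]

lemma shiftF_apply (k m : ℕ) (x : ℕ → ℝ) : shiftF k x (k + m) = x m := by
  rw [shiftF, if_pos (Nat.le_add_right k m)]
  congr 1
  omega

/-- Quadratic form of a shifted vector equals the unshifted one. -/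
lemma Sform_shift (g : ℕ → ℝ) (b k : ℕ) (x y : ℕ → ℝ)
    (hx : ∀ p, b ≤ p → x p = 0) (hy : ∀ p, b ≤ p → y p = 0) :
    Sform g (k+b) (shiftF k x) (shiftF k y) = Sform g b x y := by
  rw [Sform, Sform]
  have hsub : Finset.Ico k (k+b) ⊆ Finset.range (k+b) := by
    intro p hp; rw [Finset.mem_Ico] at hp; rw [Finset.mem_range]; omega
  rw [← Finset.sum_subset hsub (fun p hp hnp => ?_)]
  swap
  · rw [Finset.mem_range] at hp
    rw [Finset.mem_Ico, not_and_or, not_le, not_lt] at hnp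
    rcases hnp with h | h
    · apply Finset.sum_eq_zero; intro q _
      rw [shiftF_vanish_low k x p h]; ring
    · omega
  rw [Finset.sum_Ico_eq_sum_range, show k + b - k = b from by omega]
  apply Finset.sum_congr rfl; intro p hp
  rw [Finset.mem_range] at hp
  rw [← Finset.sum_subset hsub (fun q hq hnq => ?_)]
  swap
  · rw [Finset.mem_range] at hq
    rw [Finset.mem_Ico, not_and_or, not_le, not_lt] at hnq
    rcases hnq with h | h
    · rw [shiftF_vanish_low k y q h]; ring
    · omega
  rw [Finset.sum_Ico_eq_sum_range, show k + b - k = b from by omega]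
  apply Finset.sum_congr rfl; intro q hq
  rw [Finset.mem_range] at hq
  rw [shiftF_apply, shiftF_apply]
  rw [show ndist (k+p) (k+q) = ndist p q from by unfold ndist; omega]

/-- Cross form of a vector against a shifted vector. -/
lemma Sform_cross (g : ℕ → ℝ) (b k : ℕ) (hbk : b ≤ k) (x y : ℕ → ℝ)
    (hx : ∀ p, b ≤ p → x p = 0) (hy : ∀ p, b ≤ p → y p = 0) :
    Sform g (k+b) x (shiftF k y)
      = ∑ p ∈ Finset.range b, ∑ q ∈ Finset.range b, x p * y q * g (k + q - p) := by
  rw [Sform]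
  rw [← Finset.sum_subset (Finset.range_subset_range.mpr (by omega : b ≤ k + b))
    (fun p _ hnp => ?_)]
  swap
  · rw [Finset.mem_range, not_lt] at hnp
    apply Finset.sum_eq_zero; intro q _
    rw [hx p hnp]; ring
  apply Finset.sum_congr rfl; intro p hp
  rw [Finset.mem_range] at hp
  have hsub : Finset.Ico k (k+b) ⊆ Finset.range (k+b) := by
    intro q hq; rw [Finset.mem_Ico] at hq; rw [Finset.mem_range]; omega
  rw [← Finset.sum_subset hsub (fun q hq hnq => ?_)]
  swap
  · rw [Finset.mem_range] at hq
    rw [Finset.mem_Ico, not_and_or, not_le, not_lt] at hnq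
    rcases hnq with h | h
    · rw [shiftF_vanish_low k y q h]; ring
    · omega
  rw [Finset.sum_Ico_eq_sum_range, show k + b - k = b from by omega]
  apply Finset.sum_congr rfl; intro q hq
  rw [Finset.mem_range] at hq
  rw [shiftF_apply]
  rw [show ndist p (k+q) = k + q - p from by unfold ndist; omega]

section
variable {d : ℝ} (hd : 0 < d) (hd2 : d < 1/2)

include hd hd2 in
lemma Pp_lower' (n : ℕ) (hn : 1 ≤ n) :
    d * (1-d)^(1-2*d)/(1-d) * (n:ℝ)^(2*d-1) ≤ Pp d n := by
  have h1d : (0:ℝ) < 1 - d := by linarith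
  have hn1 : (1:ℝ) ≤ (n:ℝ) := by exact_mod_cast hn
  have hnd : (0:ℝ) < (n:ℝ) - d := by linarith
  refine le_trans ?_ (Pp_lower hd hd2 n hn)
  rw [Real.div_rpow h1d.le hnd.le]
  have hmono : ((n:ℝ)-d)^(1-2*d) ≤ (n:ℝ)^(1-2*d) :=
    Real.rpow_le_rpow hnd.le (by linarith) (by linarith)
  have hpos1 : (0:ℝ) < ((n:ℝ)-d)^(1-2*d) := Real.rpow_pos_of_pos hnd _
  have hrw : (n:ℝ)^(2*d-1) = (((n:ℝ))^(1-2*d))⁻¹ := by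
    rw [← Real.rpow_neg (by linarith : (0:ℝ) ≤ (n:ℝ))]
    congr 1; ring
  rw [hrw]
  calc d * (1-d)^(1-2*d)/(1-d) * ((n:ℝ)^(1-2*d))⁻¹
      ≤ d * (1-d)^(1-2*d)/(1-d) * (((n:ℝ)-d)^(1-2*d))⁻¹ := by
        apply mul_le_mul_of_nonneg_left (inv_anti₀ hpos1 hmono)
        positivity
    _ = d / (1 - d) * ((1-d)^(1-2*d) / ((n:ℝ)-d)^(1-2*d)) := by ring

include hd hd2 in
lemma Pp_upper' (n : ℕ) (hn : 1 ≤ n) :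
    Pp d n ≤ d^(1-2*d) * (n:ℝ)^(2*d-1) := by
  have hn1 : (1:ℝ) ≤ (n:ℝ) := by exact_mod_cast hn
  have hn0 : (0:ℝ) < (n:ℝ) := by linarith
  refine (Pp_upper hd hd2 n).trans ?_
  have hdiv : d/((n:ℝ)+d) ≤ d/(n:ℝ) := by
    rw [div_le_div_iff₀ (by linarith) hn0]
    nlinarith
  have h1 : (d/((n:ℝ)+d))^(1-2*d) ≤ (d/(n:ℝ))^(1-2*d) :=
    Real.rpow_le_rpow (by positivity) hdiv (by linarith)
  refine h1.trans ?_
  rw [Real.div_rpow hd.le hn0.le]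
  have hrw : (n:ℝ)^(2*d-1) = (((n:ℝ))^(1-2*d))⁻¹ := by
    rw [← Real.rpow_neg hn0.le]
    congr 1; ring
  rw [hrw]
  rw [div_eq_mul_inv]

end

/-! ### Specialized conversion lemmas -/

lemma fin2range_quad (b : ℕ) (g : ℕ → ℝ) (u w : Fin b → ℝ) :
    ∑ i : Fin b, ∑ j : Fin b, u i * w j * g (((i : ℕ) : ℤ) - ((j : ℕ) : ℤ)).natAbs
      = Sform g b (extendF b u) (extendF b w) := by
  rw [Sform]
  rw [← Fin.sum_univ_eq_sum_range (fun p => ∑ q ∈ Finset.range b,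
    extendF b u p * extendF b w q * g (ndist p q)) b]
  apply Finset.sum_congr rfl; intro i _
  rw [← Fin.sum_univ_eq_sum_range (fun q =>
    extendF b u (i:ℕ) * extendF b w q * g (ndist (i:ℕ) q)) b]
  apply Finset.sum_congr rfl; intro j _
  rw [extendF_apply, extendF_apply]
  congr 2
  unfold ndist
  omega

lemma fin2range_cross (b k : ℕ) (g : ℕ → ℝ) (u w : Fin b → ℝ) :
    ∑ i : Fin b, ∑ j : Fin b, u i * w j * g (k + (j : ℕ) - (i : ℕ))
      = ∑ p ∈ Finset.range b, ∑ q ∈ Finset.range b,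
          extendF b u p * extendF b w q * g (k + q - p) := by
  rw [← Fin.sum_univ_eq_sum_range (fun p => ∑ q ∈ Finset.range b,
    extendF b u p * extendF b w q * g (k + q - p)) b]
  apply Finset.sum_congr rfl; intro i _
  rw [← Fin.sum_univ_eq_sum_range (fun q =>
    extendF b u (i:ℕ) * extendF b w q * g (k + q - (i:ℕ))) b]
  apply Finset.sum_congr rfl; intro j _
  rw [extendF_apply, extendF_apply]

/-! ### The given definitions -/

/-- lower bound on the canonical correlation of a stationary Gaussian
FARIMA(0,d,0): ρ_{k,b} ≥ c₂ (b/(k+b-1))^{1-2d} for 1 ≤ b < k. -/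
theorem stmt4 (d : ℝ) (hd : 0 < d) (hd2 : d < 1/2) :
    ∃ c₂ : ℝ, 0 < c₂ ∧ ∀ b k : ℕ, 1 ≤ b → b < k →
      c₂ * ((b : ℝ) / ((k : ℝ) + (b : ℝ) - 1)) ^ (1 - 2*d) ≤
        canCorr (gammaFARIMA d) k b := by
  have h1d : (0:ℝ) < 1 - d := by linarith
  have ht0 : (0:ℝ) < 1 - 2*d := by linarith
  set γ0 : ℝ := Real.Gamma (1 - 2*d) / (Real.Gamma (1 - d))^2 with hγ0def
  have hγ0 : 0 < γ0 := div_pos (Real.Gamma_pos_of_pos (by linarith))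
    (pow_pos (Real.Gamma_pos_of_pos (by linarith)) 2)
  set g : ℕ → ℝ := gammaFARIMA d with hgdef
  have hg : ∀ n, g n = γ0 * Pp d n := fun n => rfl
  have hgpos : ∀ n, 0 < g n := fun n => by
    rw [hg]; exact mul_pos hγ0 (Pp_pos hd hd2 n)
  have hganti : ∀ m n : ℕ, m ≤ n → g n ≤ g m := fun m n h => by
    rw [hg, hg]; exact mul_le_mul_of_nonneg_left (Pp_antitone hd hd2 h) hγ0.le
  have hcoef : ∀ L : ℕ, ∀ j ∈ Finset.Icc 1 L, 0 ≤ coefD g L j := by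
    intro L j hj
    rw [Finset.mem_Icc] at hj
    rw [coefD]
    split_ifs with hc
    · have := hganti (L-1) L (by omega)
      linarith
    · have hcv := Pp_convex hd hd2 (j-1)
      rw [show j - 1 + 2 = j + 1 from by omega, show j - 1 + 1 = j from by omega] at hcv
      rw [hg, hg, hg]
      nlinarith
  set cL : ℝ := d * (1-d)^(1-2*d)/(1-d) with hcLdef
  have hcL : 0 < cL :=
    div_pos (mul_pos hd (Real.rpow_pos_of_pos h1d _)) h1d
  set CC : ℝ := 1 + d^(1-2*d)/d with hCCdef
  have hCC : 0 < CC := by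
    have h2 := div_pos (Real.rpow_pos_of_pos hd (1-2*d)) hd
    rw [hCCdef]; linarith
  refine ⟨cL / CC, div_pos hcL hCC, ?_⟩
  intro b k hb hbk
  haveI : Nonempty (Fin b) := ⟨⟨0, by omega⟩⟩
  have hb0 : (0:ℝ) < (b:ℝ) := by exact_mod_cast hb
  have hnrcast : ((k + b - 1 : ℕ) : ℝ) = (k:ℝ) + (b:ℝ) - 1 := by
    rw [Nat.cast_sub (by omega : 1 ≤ k + b)]
    push_cast
    ring
  set nr : ℝ := (k:ℝ) + (b:ℝ) - 1 with hnrdef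
  have hnr1 : (1:ℝ) ≤ nr := by
    rw [hnrdef]
    have h1 : (1:ℝ) ≤ (k:ℝ) := by exact_mod_cast (by omega : 1 ≤ k)
    have h2 : (1:ℝ) ≤ (b:ℝ) := by exact_mod_cast hb
    linarith
  have hnr0 : (0:ℝ) < nr := by linarith
  -- Every element of the set is at most 1 (Cauchy–Schwarz for the PSD Toeplitz form)
  have hBdd : ∀ r ∈ {r : ℝ | ∃ u v : Fin b → ℝ,
      r = (∑ i : Fin b, ∑ j : Fin b, u i * v j * g (k + (j : ℕ) - (i : ℕ))) /
        (Real.sqrt (∑ i : Fin b, ∑ j : Fin b, u i * u j *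
            g (((i : ℕ) : ℤ) - ((j : ℕ) : ℤ)).natAbs) *
         Real.sqrt (∑ i : Fin b, ∑ j : Fin b, v i * v j *
            g (((i : ℕ) : ℤ) - ((j : ℕ) : ℤ)).natAbs))}, r ≤ 1 := by
    rintro r ⟨u, v, rfl⟩
    have hXv : ∀ p, b ≤ p → extendF b u p = 0 := fun p hp => extendF_vanish b u p hp
    have hVv : ∀ p, b ≤ p → extendF b v p = 0 := fun p hp => extendF_vanish b v p hp
    have eN : (∑ i : Fin b, ∑ j : Fin b, u i * v j * g (k + (j : ℕ) - (i : ℕ)))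
        = Sform g (k+b) (extendF b u) (shiftF k (extendF b v)) := by
      rw [fin2range_cross b k g u v,
        Sform_cross g b k (by omega) (extendF b u) (extendF b v) hXv hVv]
    have eQu : (∑ i : Fin b, ∑ j : Fin b, u i * u j *
          g (((i : ℕ) : ℤ) - ((j : ℕ) : ℤ)).natAbs)
        = Sform g (k+b) (extendF b u) (extendF b u) := by
      rw [fin2range_quad b g u u,
        ← Sform_restrict g (by omega : b ≤ k + b) (extendF b u) (extendF b u) hXv hXv]
    have eQv : (∑ i : Fin b, ∑ j : Fin b, v i * v j *
          g (((i : ℕ) : ℤ) - ((j : ℕ) : ℤ)).natAbs)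
        = Sform g (k+b) (shiftF k (extendF b v)) (shiftF k (extendF b v)) := by
      rw [fin2range_quad b g v v,
        ← Sform_shift g b k (extendF b v) (extendF b v) hVv hVv]
    rw [eN, eQu, eQv]
    set X : ℕ → ℝ := extendF b u
    set Y : ℕ → ℝ := shiftF k (extendF b v)
    have hA : 0 ≤ Sform g (k+b) X X :=
      Sform_nonneg g (k+b) (hgpos (k+b)).le (hcoef (k+b)) X
    have hB : 0 ≤ Sform g (k+b) Y Y :=
      Sform_nonneg g (k+b) (hgpos (k+b)).le (hcoef (k+b)) Y
    rcases eq_or_ne (Real.sqrt (Sform g (k+b) X X) * Real.sqrt (Sform g (k+b) Y Y)) 0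
      with hz | hz
    · rw [hz, div_zero]
      norm_num
    · have hz' : 0 < Real.sqrt (Sform g (k+b) X X) * Real.sqrt (Sform g (k+b) Y Y) :=
        lt_of_le_of_ne (mul_nonneg (Real.sqrt_nonneg _) (Real.sqrt_nonneg _)) (Ne.symm hz)
      rw [div_le_one hz']
      calc Sform g (k+b) X Y ≤ |Sform g (k+b) X Y| := le_abs_self _
        _ = Real.sqrt ((Sform g (k+b) X Y)^2) := (Real.sqrt_sq_eq_abs _).symm
        _ ≤ Real.sqrt (Sform g (k+b) X X * Sform g (k+b) Y Y) :=
            Real.sqrt_le_sqrt (Sform_cs g (k+b) (hgpos (k+b)).le (hcoef (k+b)) X Y)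
        _ = Real.sqrt (Sform g (k+b) X X) * Real.sqrt (Sform g (k+b) Y Y) :=
            Real.sqrt_mul hA _
  -- the candidate element u = v = (1,…,1)
  set N : ℝ := ∑ i : Fin b, ∑ j : Fin b, g (k + (j : ℕ) - (i : ℕ)) with hNdef
  set D : ℝ := ∑ i : Fin b, ∑ j : Fin b,
      g (((i : ℕ) : ℤ) - ((j : ℕ) : ℤ)).natAbs with hDdef
  have hD0 : 0 < D := by
    rw [hDdef]
    exact Finset.sum_pos (fun i _ => Finset.sum_pos (fun j _ => hgpos _)
      Finset.univ_nonempty) Finset.univ_nonempty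
  have hN0 : 0 < N := by
    rw [hNdef]
    exact Finset.sum_pos (fun i _ => Finset.sum_pos (fun j _ => hgpos _)
      Finset.univ_nonempty) Finset.univ_nonempty
  have hmem : N / (Real.sqrt D * Real.sqrt D) ∈ {r : ℝ | ∃ u v : Fin b → ℝ,
      r = (∑ i : Fin b, ∑ j : Fin b, u i * v j * g (k + (j : ℕ) - (i : ℕ))) /
        (Real.sqrt (∑ i : Fin b, ∑ j : Fin b, u i * u j *
            g (((i : ℕ) : ℤ) - ((j : ℕ) : ℤ)).natAbs) *
         Real.sqrt (∑ i : Fin b, ∑ j : Fin b, v i * v j *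
            g (((i : ℕ) : ℤ) - ((j : ℕ) : ℤ)).natAbs))} := by
    refine ⟨fun _ => 1, fun _ => 1, ?_⟩
    simp only [one_mul]
    rfl
  have hsup : N / D ≤ canCorr g k b := by
    have : N / (Real.sqrt D * Real.sqrt D) = N / D := by
      rw [Real.mul_self_sqrt hD0.le]
    rw [← this, canCorr]
    exact le_csSup ⟨1, fun r hr => hBdd r hr⟩ hmem
  -- lower bound for N
  have hglow : γ0 * (cL * nr^(2*d-1)) ≤ g (k+b-1) := by
    have h2 := Pp_lower' hd hd2 (k+b-1) (by omega)
    rw [hnrcast, ← hcLdef] at h2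
    rw [hg]
    exact mul_le_mul_of_nonneg_left h2 hγ0.le
  have hNlow : γ0 * (cL * nr^(2*d-1)) * ((b:ℝ)*(b:ℝ)) ≤ N := by
    have hsum : ((b:ℝ)*(b:ℝ)) * g (k+b-1) ≤ N := by
      rw [hNdef]
      calc ((b:ℝ)*(b:ℝ)) * g (k+b-1)
          = ∑ _i : Fin b, ∑ _j : Fin b, g (k+b-1) := by
            simp only [Finset.sum_const, Finset.card_univ, Fintype.card_fin, nsmul_eq_mul]
            ring
        _ ≤ ∑ i : Fin b, ∑ j : Fin b, g (k + (j : ℕ) - (i : ℕ)) := by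
            apply Finset.sum_le_sum; intro i _
            apply Finset.sum_le_sum; intro j _
            exact hganti _ _ (by have := j.isLt; omega)
    have h3 : γ0 * (cL * nr^(2*d-1)) * ((b:ℝ)*(b:ℝ)) ≤ g (k+b-1) * ((b:ℝ)*(b:ℝ)) :=
      mul_le_mul_of_nonneg_right hglow (by positivity)
    nlinarith [hsum]
  -- upper bound for D
  set Ssum : ℝ := ∑ m ∈ Finset.range (b-1), Pp d (m+1) with hSdef
  have hrow : ∀ i : Fin b, ∑ q ∈ Finset.range b, Pp d (ndist (i:ℕ) q) ≤ 1 + 2*Ssum := by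
    intro i
    rw [← Finset.sum_filter_add_sum_filter_not (Finset.range b) (fun q => q ≤ (i:ℕ))]
    have hf1 : Finset.filter (fun q => q ≤ (i:ℕ)) (Finset.range b)
        = Finset.range ((i:ℕ)+1) := by
      ext q
      simp only [Finset.mem_filter, Finset.mem_range, Nat.lt_succ_iff]
      have := i.isLt
      omega
    have hf2 : Finset.filter (fun q => ¬ q ≤ (i:ℕ)) (Finset.range b)
        = Finset.Ico ((i:ℕ)+1) b := by
      ext q
      simp only [Finset.mem_filter, Finset.mem_range, Finset.mem_Ico, not_le]
      omega
    rw [hf1, hf2]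
    have part1 : ∑ q ∈ Finset.range ((i:ℕ)+1), Pp d (ndist (i:ℕ) q) ≤ 1 + Ssum := by
      have e : ∀ q ∈ Finset.range ((i:ℕ)+1),
          Pp d (ndist (i:ℕ) q) = Pp d ((i:ℕ) - q) := by
        intro q hq
        rw [Finset.mem_range] at hq
        congr 1
        unfold ndist
        omega
      rw [Finset.sum_congr rfl e]
      have hrefl := Finset.sum_range_reflect (fun m => Pp d m) ((i:ℕ)+1)
      have hxx : ∀ j : ℕ, (i:ℕ) + 1 - 1 - j = (i:ℕ) - j := fun j => by omega
      simp only [hxx] at hrefl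
      rw [hrefl, Finset.sum_range_succ', Pp_zero]
      have hle : ∑ m ∈ Finset.range (i:ℕ), Pp d (m+1) ≤ Ssum := by
        rw [hSdef]
        apply Finset.sum_le_sum_of_subset_of_nonneg
        · apply Finset.range_subset_range.mpr
          have := i.isLt
          omega
        · intro m _ _
          exact (Pp_pos hd hd2 _).le
      linarith
    have part2 : ∑ q ∈ Finset.Ico ((i:ℕ)+1) b, Pp d (ndist (i:ℕ) q) ≤ Ssum := by
      rw [Finset.sum_Ico_eq_sum_range]
      have e : ∀ m ∈ Finset.range (b - ((i:ℕ)+1)),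
          Pp d (ndist (i:ℕ) ((i:ℕ)+1+m)) = Pp d (m+1) := by
        intro m _
        congr 1
        unfold ndist
        omega
      rw [Finset.sum_congr rfl e]
      rw [hSdef]
      apply Finset.sum_le_sum_of_subset_of_nonneg
      · apply Finset.range_subset_range.mpr
        omega
      · intro m _ _
        exact (Pp_pos hd hd2 _).le
    linarith
  have hS : Ssum ≤ d^(1-2*d) * (b:ℝ)^(2*d) / (2*d) := by
    have h1 : Ssum ≤ ∑ m ∈ Finset.range (b-1), d^(1-2*d) * ((m+1:ℕ):ℝ)^(2*d-1) := by
      rw [hSdef]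
      apply Finset.sum_le_sum
      intro m _
      exact Pp_upper' hd hd2 (m+1) (by omega)
    have h2 : ∑ m ∈ Finset.range (b-1), d^(1-2*d) * ((m+1:ℕ):ℝ)^(2*d-1)
        = d^(1-2*d) * ∑ j ∈ Finset.Icc 1 (b-1), (j:ℝ)^(2*d-1) := by
      rw [Finset.mul_sum, ← Finset.Ico_add_one_right_eq_Icc, Finset.sum_Ico_eq_sum_range]
      apply Finset.sum_congr
      · congr 1
      · intro m _
        congr 3
        omega
    have h3 : ∑ j ∈ Finset.Icc 1 (b-1), (j:ℝ)^(2*d-1) ≤ ((b-1:ℕ):ℝ)^(2*d)/(2*d) :=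
      sum_rpow_le hd hd2 (b-1)
    have h4 : ((b-1:ℕ):ℝ)^(2*d) ≤ (b:ℝ)^(2*d) := by
      apply Real.rpow_le_rpow (Nat.cast_nonneg _) _ (by linarith)
      exact_mod_cast Nat.sub_le b 1
    calc Ssum ≤ d^(1-2*d) * ∑ j ∈ Finset.Icc 1 (b-1), (j:ℝ)^(2*d-1) := by
          rw [← h2]; exact h1
      _ ≤ d^(1-2*d) * (((b-1:ℕ):ℝ)^(2*d)/(2*d)) := by
          apply mul_le_mul_of_nonneg_left h3 (Real.rpow_pos_of_pos hd _).le
      _ ≤ d^(1-2*d) * ((b:ℝ)^(2*d)/(2*d)) := by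
          apply mul_le_mul_of_nonneg_left _ (Real.rpow_pos_of_pos hd _).le
          exact (div_le_div_iff_of_pos_right (by linarith : (0:ℝ) < 2*d)).mpr h4
      _ = d^(1-2*d) * (b:ℝ)^(2*d) / (2*d) := by ring
  have hDup : D ≤ γ0 * (CC * ((b:ℝ) * (b:ℝ)^(2*d))) := by
    have hDfact : D = γ0 * ∑ i : Fin b, ∑ q ∈ Finset.range b, Pp d (ndist (i:ℕ) q) := by
      rw [hDdef, Finset.mul_sum]
      apply Finset.sum_congr rfl; intro i _
      rw [Finset.mul_sum,
        ← Fin.sum_univ_eq_sum_range (fun q => γ0 * Pp d (ndist (i:ℕ) q)) b]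
      apply Finset.sum_congr rfl; intro j _
      rw [show ((((i:ℕ)):ℤ) - (((j:ℕ)):ℤ)).natAbs = ndist (i:ℕ) (j:ℕ) from by
        unfold ndist; omega]
      exact hg _
    have hrows : ∑ i : Fin b, ∑ q ∈ Finset.range b, Pp d (ndist (i:ℕ) q)
        ≤ (b:ℝ) * (1 + 2*Ssum) := by
      calc ∑ i : Fin b, ∑ q ∈ Finset.range b, Pp d (ndist (i:ℕ) q)
          ≤ ∑ _i : Fin b, (1 + 2*Ssum) := Finset.sum_le_sum (fun i _ => hrow i)
        _ = (b:ℝ) * (1 + 2*Ssum) := by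
            simp only [Finset.sum_const, Finset.card_univ, Fintype.card_fin, nsmul_eq_mul]
    have h1b : (1:ℝ) ≤ (b:ℝ)^(2*d) :=
      Real.one_le_rpow (by exact_mod_cast hb) (by linarith)
    have hin : (1 + 2*Ssum) ≤ CC * (b:ℝ)^(2*d) := by
      have e1 : 2 * (d^(1-2*d) * (b:ℝ)^(2*d) / (2*d)) = (d^(1-2*d)/d) * (b:ℝ)^(2*d) := by
        field_simp
      have e2 : CC * (b:ℝ)^(2*d) = (b:ℝ)^(2*d) + (d^(1-2*d)/d) * (b:ℝ)^(2*d) := by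
        rw [hCCdef]; ring
      have hS2 : 2*Ssum ≤ (d^(1-2*d)/d) * (b:ℝ)^(2*d) := by
        rw [← e1]; linarith [hS]
      rw [e2]
      linarith [h1b, hS2]
    calc D = γ0 * ∑ i : Fin b, ∑ q ∈ Finset.range b, Pp d (ndist (i:ℕ) q) := hDfact
      _ ≤ γ0 * ((b:ℝ) * (1 + 2*Ssum)) := mul_le_mul_of_nonneg_left hrows hγ0.le
      _ ≤ γ0 * ((b:ℝ) * (CC * (b:ℝ)^(2*d))) := by
          apply mul_le_mul_of_nonneg_left _ hγ0.le
          exact mul_le_mul_of_nonneg_left hin hb0.le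
      _ = γ0 * (CC * ((b:ℝ) * (b:ℝ)^(2*d))) := by ring
  -- final algebra
  have hX0 : (b:ℝ)^(2*d-1) ≠ 0 := (Real.rpow_pos_of_pos hb0 _).ne'
  have hY0 : nr^(2*d-1) ≠ 0 := (Real.rpow_pos_of_pos hnr0 _).ne'
  have hbb : (b:ℝ)^(2*d) = (b:ℝ)^(2*d-1) * (b:ℝ) := by
    have h := Real.rpow_add hb0 (2*d-1) 1
    rw [Real.rpow_one, show 2*d-1+1 = 2*d from by ring] at h
    exact h
  have halg : cL/CC * ((b:ℝ)/nr)^(1-2*d)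
      = (γ0 * (cL * nr^(2*d-1)) * ((b:ℝ)*(b:ℝ)))
        / (γ0 * (CC * ((b:ℝ) * (b:ℝ)^(2*d)))) := by
    rw [Real.div_rpow hb0.le hnr0.le,
      show (1-2*d) = -(2*d-1) from by ring,
      Real.rpow_neg hb0.le, Real.rpow_neg hnr0.le, hbb]
    field_simp
  calc cL/CC * ((b:ℝ)/((k:ℝ)+(b:ℝ)-1))^(1-2*d)
      = (γ0 * (cL * nr^(2*d-1)) * ((b:ℝ)*(b:ℝ)))
        / (γ0 * (CC * ((b:ℝ) * (b:ℝ)^(2*d)))) := halg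
    _ ≤ N / D := by
        apply div_le_div₀ hN0.le hNlow hD0 hDup
    _ ≤ canCorr g k b := hsup
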